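/- arXiv:1006.3932 — 6 statements merged into one kernel-verified Lean document; each statement's English description precedes it below -/
import Mathlib

section
/- Let r, s, t be real numbers with r, t ≥ 0, and let φ(w) = (s + i(t-r))w² + (-s + i(t+r)) for w ∈ ℂ. Then |φ(0)|² = s² + (t+r)², and if w is any root of φ (with s + i(t-r) ≠ 0), then |w| ≥ 1. -/
open Complex

theorem phi_abs_zero_and_roots (r s t : ℝ) (hr : 0 ≤ r) (ht : 0 ≤ t)
    (φ : ℂ → ℂ)
    (hφ : ∀ w : ℂ, φ w = ((s : ℂ) + Complex.I * ((t : ℂ) - r)) * w ^ 2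
        + (-(s : ℂ) + Complex.I * ((t : ℂ) + r)))
    (hc : (s : ℂ) + Complex.I * ((t : ℂ) - r) ≠ 0) :
    ‖φ 0‖ ^ 2 = s ^ 2 + (t + r) ^ 2 ∧
      ∀ w : ℂ, φ w = 0 → 1 ≤ ‖w‖ := by
  have h0 : φ 0 = -(s : ℂ) + Complex.I * ((t : ℂ) + r) := by
    rw [hφ]; ring
  constructor
  · rw [h0, Complex.sq_norm]
    simp [Complex.normSq_apply]
    ring
  · intro w hw
    rw [hφ] at hw
    have key : ((s : ℂ) + Complex.I * ((t : ℂ) - r)) * w ^ 2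
        = (s : ℂ) - Complex.I * ((t : ℂ) + r) := by
      linear_combination hw
    have habs := congrArg (‖·‖) key
    rw [norm_mul] at habs
    have h1 : ‖(s : ℂ) + Complex.I * ((t : ℂ) - r)‖ ^ 2
        = s ^ 2 + (t - r) ^ 2 := by
      rw [Complex.sq_norm]
      simp [Complex.normSq_apply]
      ring
    have h2 : ‖(s : ℂ) - Complex.I * ((t : ℂ) + r)‖ ^ 2
        = s ^ 2 + (t + r) ^ 2 := by
      rw [Complex.sq_norm]
      simp [Complex.normSq_apply]
      ring
    set A := ‖(s : ℂ) + Complex.I * ((t : ℂ) - r)‖ with hA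
    have hApos : 0 < A := by
      simpa [hA] using (norm_pos_iff.mpr hc)
    have hsq : A ^ 2 * ‖w‖ ^ 4 = s ^ 2 + (t + r) ^ 2 := by
      rw [← h2, ← habs]
      rw [norm_pow]
      ring
    have hle : A ^ 2 ≤ A ^ 2 * ‖w‖ ^ 4 := by
      rw [hsq]
      nlinarith [h1]
    have h4 : 1 ≤ ‖w‖ ^ 4 := by
      have := (mul_le_mul_iff_of_pos_left (by positivity : (0:ℝ) < A ^ 2)).mp
        (by linarith [hle] : A ^ 2 * 1 ≤ A ^ 2 * ‖w‖ ^ 4)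
      linarith
    by_contra h
    push_neg at h
    have := pow_lt_one₀ (norm_nonneg w) h (by norm_num : (4:ℕ) ≠ 0)
    linarith
end

section
/- Let r, s, t be real numbers with r² + s² + t² = 1, r, t > 0, and let φ(w) = (s + i(t-r))w² + (-s + i(t+r)). Then (1/2π) ∫₀^{2π} log|φ(e^{iθ})| dθ = (1/2) log(1 + 2rt). -/
open Complex Real

lemma mean_value_circle (f : ℂ → ℂ)
    (hf : ∀ x ∈ Metric.closedBall (0:ℂ) 1, DifferentiableAt ℂ f x) :
    ∫ θ in (0:ℝ)..(2 * π), f (Complex.exp (θ * Complex.I)) = 2 * π * f 0 := by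
  have h := circleIntegral_sub_inv_smul_of_differentiable_on_off_countable
    (s := (∅ : Set ℂ)) (c := 0) (R := 1) (w := 0) (f := f) Set.countable_empty
    (by simp) (fun x hx => (hf x hx).continuousAt.continuousWithinAt)
    (fun x hx => hf x (Metric.ball_subset_closedBall hx.1))
  rw [circleIntegral] at h
  simp only [deriv_circleMap, circleMap_zero, sub_zero, smul_eq_mul] at h
  have h2 : ∫ θ in (0:ℝ)..(2*π), Complex.I * f (Complex.exp (θ * Complex.I))
      = 2 * π * Complex.I * f 0 := by
    rw [← h]
    apply intervalIntegral.integral_congr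
    intro θ _
    have he : Complex.exp (θ * Complex.I) ≠ 0 := Complex.exp_ne_zero _
    simp only [Complex.ofReal_one, one_mul]
    field_simp
  rw [intervalIntegral.integral_const_mul] at h2
  exact mul_left_cancel₀ Complex.I_ne_zero
    (h2.trans (by ring : (2*(π:ℂ)*Complex.I*f 0 : ℂ) = Complex.I*(2*π*f 0)))

theorem jensen_circle_average (r s t : ℝ) (h : r ^ 2 + s ^ 2 + t ^ 2 = 1)
    (hr : 0 < r) (ht : 0 < t)
    (φ : ℂ → ℂ)
    (hφ : ∀ w : ℂ, φ w = ((s : ℂ) + Complex.I * ((t : ℂ) - r)) * w ^ 2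
        + (-(s : ℂ) + Complex.I * ((t : ℂ) + r))) :
    (1 / (2 * π)) * ∫ θ in (0:ℝ)..(2 * π),
        Real.log ‖φ (Complex.exp (θ * Complex.I))‖
      = (1 / 2) * Real.log (1 + 2 * r * t) := by
  set a : ℂ := (s : ℂ) + Complex.I * ((t : ℂ) - r) with ha_def
  set b : ℂ := -(s : ℂ) + Complex.I * ((t : ℂ) + r) with hb_def
  have hbsq : (‖b‖) ^ 2 = 1 + 2 * r * t := by
    rw [Complex.sq_norm, Complex.normSq_apply]
    simp [hb_def]
    nlinarith [h]
  have hasq : (‖a‖) ^ 2 = 1 - 2 * r * t := by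
    rw [Complex.sq_norm, Complex.normSq_apply]
    simp [ha_def]
    nlinarith [h]
  have hrt : 0 < 2 * r * t := by positivity
  have hbpos : 0 < ‖b‖ := by
    nlinarith [norm_nonneg b]
  have hb0 : b ≠ 0 := by
    intro hb; rw [hb] at hbpos; simp at hbpos
  have hab : ‖a / b‖ < 1 := by
    rw [norm_div, div_lt_one hbpos]
    have h1 : (‖a‖) ^ 2 < (‖b‖) ^ 2 := by
      rw [hasq, hbsq]; linarith
    nlinarith [norm_nonneg a, norm_nonneg b]
  set g : ℂ → ℂ := fun w => Complex.log (1 + (a / b) * w ^ 2) with hg_def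
  -- positivity of real part of the inner expression on the closed ball
  have hslit : ∀ w : ℂ, w ∈ Metric.closedBall (0:ℂ) 1 →
      (1 + (a / b) * w ^ 2) ∈ Complex.slitPlane := by
    intro w hw
    left
    have hw1 : ‖w‖ ≤ 1 := by
      simpa [Complex.dist_eq] using Metric.mem_closedBall.mp hw
    have habs : ‖(a / b) * w ^ 2‖ < 1 := by
      rw [norm_mul, norm_pow]
      calc ‖a/b‖ * ‖w‖ ^ 2
          ≤ ‖a/b‖ * 1 := by
            apply mul_le_mul_of_nonneg_left _ (norm_nonneg _)
            nlinarith [norm_nonneg w]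
        _ < 1 := by simpa using hab
    have hre : |((a / b) * w ^ 2).re| ≤ ‖(a / b) * w ^ 2‖ :=
      Complex.abs_re_le_norm _
    have : -1 < ((a / b) * w ^ 2).re := by
      linarith [neg_abs_le ((a / b * w ^ 2).re)]
    simp only [Complex.add_re, Complex.one_re]
    linarith
  have hgdiff : ∀ x ∈ Metric.closedBall (0:ℂ) 1, DifferentiableAt ℂ g x := by
    intro x hx
    apply DifferentiableAt.clog
    · fun_prop
    · exact hslit x hx
  have hmv := mean_value_circle g hgdiff
  have hg0 : g 0 = 0 := by simp [hg_def]
  rw [hg0, mul_zero] at hmv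
  -- pointwise identity
  have hpt : ∀ θ : ℝ, Real.log ‖φ (Complex.exp (θ * Complex.I))‖
      = Real.log (‖b‖) + (g (Complex.exp (θ * Complex.I))).re := by
    intro θ
    set w : ℂ := Complex.exp (θ * Complex.I) with hw_def
    have hwball : w ∈ Metric.closedBall (0:ℂ) 1 := by
      simp [hw_def, Complex.dist_eq, Complex.norm_exp]
    have hne : (1 + (a / b) * w ^ 2) ≠ 0 := Complex.slitPlane_ne_zero (hslit w hwball)
    have hfact : φ w = b * (1 + (a / b) * w ^ 2) := by
      rw [hφ w]; field_simp [ha_def, hb_def]; ring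
    rw [hfact, norm_mul, Real.log_mul hbpos.ne' (norm_pos_iff.mpr hne).ne']
    congr 1
    rw [hg_def]
    exact (Complex.log_re _).symm
  -- continuity / integrability
  have hcont : Continuous fun θ : ℝ => g (Complex.exp (θ * Complex.I)) := by
    apply continuous_iff_continuousAt.mpr
    intro θ
    have h1 : ContinuousAt g (Complex.exp ((θ:ℂ) * Complex.I)) :=
      (hgdiff _ (by simp [Complex.dist_eq, Complex.norm_exp])).continuousAt
    have h2 : Continuous fun θ : ℝ => Complex.exp ((θ:ℂ) * Complex.I) := by fun_prop
    have h3 := ContinuousAt.comp (f := fun θ : ℝ => Complex.exp ((θ:ℂ) * Complex.I))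
      (x := θ) h1 h2.continuousAt
    simpa [Function.comp_def] using h3
  have hint : IntervalIntegrable (fun θ : ℝ => g (Complex.exp (θ * Complex.I)))
      MeasureTheory.volume 0 (2 * π) := hcont.intervalIntegrable _ _
  have hre : ∫ θ in (0:ℝ)..(2 * π), (g (Complex.exp (θ * Complex.I))).re = 0 := by
    have := Complex.reCLM.intervalIntegral_comp_comm hint (a := 0) (b := 2 * π)
    simp only [Complex.reCLM_apply] at this
    rw [this, hmv]; simp
  have hsplit : (∫ θ in (0:ℝ)..(2 * π),
      Real.log ‖φ (Complex.exp (θ * Complex.I))‖)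
      = 2 * π * Real.log (‖b‖) := by
    have : (fun θ : ℝ => Real.log ‖φ (Complex.exp (θ * Complex.I))‖)
        = fun θ : ℝ => Real.log (‖b‖) + (g (Complex.exp (θ * Complex.I))).re := by
      funext θ; exact hpt θ
    rw [this]
    have hcon2 : Continuous fun θ : ℝ => (g (Complex.exp (θ * Complex.I))).re := by
      exact Complex.continuous_re.comp hcont
    rw [intervalIntegral.integral_add intervalIntegrable_const
      (hcon2.intervalIntegrable _ _), hre]
    simp [mul_comm]
  rw [hsplit]
  have hπ : (2 * π) ≠ 0 := by positivity
  have hlogb : Real.log (1 + 2 * r * t) = 2 * Real.log (‖b‖) := by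
    rw [← hbsq, Real.log_pow]; push_cast; ring
  rw [hlogb]
  field_simp
end

section
/- For z = (z₁,...,z_m) ∈ ℂ^m with Im z ≠ 0 (i.e., z ∉ ℝ^m), the quantity |1 + z·z| / (1 + ‖z‖²) is strictly less than 1, where z·z = z₁² + ⋯ + z_m² and ‖z‖² = |z₁|² + ⋯ + |z_m|². -/
open Complex Finset

theorem ratio_lt_one_several_vars (m : ℕ) (z : Fin m → ℂ)
    (hz : ∃ i, (z i).im ≠ 0) :
    ‖1 + ∑ i, (z i) ^ 2‖ / (1 + ∑ i, (‖z i‖) ^ 2) < 1 := by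
  set P := ∑ i, (z i).re ^ 2 with hPdef
  set Q := ∑ i, (z i).im ^ 2 with hQdef
  set R := ∑ i, (z i).re * (z i).im with hRdef
  have hQ : 0 < Q := by
    obtain ⟨i, hi⟩ := hz
    exact Finset.sum_pos' (fun j _ => sq_nonneg _) ⟨i, Finset.mem_univ i, by positivity⟩
  have hP : 0 ≤ P := Finset.sum_nonneg fun _ _ => sq_nonneg _
  have hCS : R ^ 2 ≤ P * Q := by
    exact Finset.sum_mul_sq_le_sq_mul_sq Finset.univ (fun i => (z i).re) (fun i => (z i).im)
  have hsum : (∑ i, (‖z i‖) ^ 2) = P + Q := by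
    rw [hPdef, hQdef, ← Finset.sum_add_distrib]
    refine Finset.sum_congr rfl fun i _ => ?_
    rw [Complex.sq_norm, Complex.normSq_apply]; ring
  have hre : (1 + ∑ i, (z i) ^ 2).re = 1 + (P - Q) := by
    rw [Complex.add_re, Complex.one_re, Complex.re_sum, hPdef, hQdef, ← Finset.sum_sub_distrib]
    congr 1
    exact Finset.sum_congr rfl fun i _ => by rw [pow_two, Complex.mul_re]; ring
  have him : (1 + ∑ i, (z i) ^ 2).im = 2 * R := by
    rw [Complex.add_im, Complex.one_im, Complex.im_sum, hRdef, Finset.mul_sum, zero_add]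
    exact Finset.sum_congr rfl fun i _ => by rw [pow_two, Complex.mul_im]; ring
  have hS : (0:ℝ) < 1 + (P + Q) := by linarith
  rw [hsum, div_lt_one hS]
  refine lt_of_pow_lt_pow_left₀ 2 (le_of_lt hS) ?_
  rw [Complex.sq_norm, Complex.normSq_apply, hre, him]
  nlinarith [hCS, hQ, hP]
end

section
/- For z ∈ ℂ and N ∈ ℕ, with F_N(z) = (binom(N,ℓ)^{1/2} z^ℓ)_{ℓ=0}^N, one has ‖Re F_N(z)‖² / ‖F_N(z)‖² = 1/2 + (1/2) Re((1+z²)/(1+|z|²))^N, where Re F_N(z) denotes the vector of real parts of the entries of F_N(z). -/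
open Complex Finset

theorem real_part_norm_ratio (z : ℂ) (N : ℕ) :
    (∑ ℓ ∈ Finset.range (N + 1),
        (((Real.sqrt (N.choose ℓ) : ℂ) * z ^ ℓ).re) ^ 2) /
      (∑ ℓ ∈ Finset.range (N + 1),
        (‖(Real.sqrt (N.choose ℓ) : ℂ) * z ^ ℓ‖) ^ 2)
      = 1 / 2 + (1 / 2) * (((1 + z ^ 2) / (1 + ((‖z‖ : ℝ) : ℂ) ^ 2)) ^ N).re := by
  set r : ℝ := ‖z‖ with hr
  set D : ℝ := (1 + r ^ 2) ^ N with hD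
  have hDpos : (0 : ℝ) < D := by positivity
  set R : ℝ := (((1 + z ^ 2)) ^ N).re with hR
  -- real binomial
  have binR : ∑ ℓ ∈ Finset.range (N + 1), (N.choose ℓ : ℝ) * (r ^ 2) ^ ℓ = D := by
    rw [hD, show (1:ℝ) + r ^ 2 = r ^ 2 + 1 from add_comm _ _, add_pow]
    simp [mul_comm]
  have binC : ∑ ℓ ∈ Finset.range (N + 1), (N.choose ℓ : ℂ) * (z ^ 2) ^ ℓ = (1 + z ^ 2) ^ N := by
    rw [show (1:ℂ) + z ^ 2 = z ^ 2 + 1 from add_comm _ _, add_pow]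
    simp [mul_comm]
  -- denominator
  have hden : (∑ ℓ ∈ Finset.range (N + 1),
      (‖(Real.sqrt (N.choose ℓ) : ℂ) * z ^ ℓ‖) ^ 2) = D := by
    rw [← binR]
    refine Finset.sum_congr rfl fun ℓ _ => ?_
    rw [norm_mul, Complex.norm_real, Real.norm_eq_abs, norm_pow, mul_pow,
      _root_.abs_of_nonneg (Real.sqrt_nonneg _), Real.sq_sqrt (by positivity), ← pow_mul, ← pow_mul,
      mul_comm ℓ 2, ← hr]
  -- numerator
  have hnum : (∑ ℓ ∈ Finset.range (N + 1),
      (((Real.sqrt (N.choose ℓ) : ℂ) * z ^ ℓ).re) ^ 2) = (D + R) / 2 := by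
    have term : ∀ ℓ, (((Real.sqrt (N.choose ℓ) : ℂ) * z ^ ℓ).re) ^ 2 =
        ((N.choose ℓ : ℝ) * (r ^ 2) ^ ℓ + ((N.choose ℓ : ℂ) * (z ^ 2) ^ ℓ).re) / 2 := by
      intro ℓ
      have h1 : ((Real.sqrt (N.choose ℓ) : ℂ) * z ^ ℓ).re = Real.sqrt (N.choose ℓ) * (z ^ ℓ).re := by
        simp
      have h2 : ((z ^ ℓ).re) ^ 2 = ((r ^ 2) ^ ℓ + ((z ^ 2) ^ ℓ).re) / 2 := by
        have hns : (r ^ 2) ^ ℓ = Complex.normSq (z ^ ℓ) := by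
          rw [Complex.normSq_eq_norm_sq, norm_pow, ← hr, ← pow_mul, ← pow_mul, mul_comm]
        have hsq : (z ^ 2) ^ ℓ = (z ^ ℓ) ^ 2 := by ring
        rw [hns, hsq]
        rcases (z ^ ℓ) with ⟨x, y⟩
        simp [Complex.normSq_apply, pow_two, Complex.mul_re]
        try ring
      have h3 : ((N.choose ℓ : ℂ) * (z ^ 2) ^ ℓ).re = (N.choose ℓ : ℝ) * ((z ^ 2) ^ ℓ).re := by
        simp
      rw [h1, mul_pow, Real.sq_sqrt (by positivity), h2, h3]
      ring
    rw [Finset.sum_congr rfl fun ℓ _ => term ℓ, ← Finset.sum_div, Finset.sum_add_distrib,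
      binR]
    congr 1
    congr 1
    rw [hR, ← binC, Complex.re_sum]
  -- rewrite RHS real part
  have hRHS : (((1 + z ^ 2) / (1 + ((r : ℝ) : ℂ) ^ 2)) ^ N).re = R / D := by
    have hcast : (1 + ((r : ℝ) : ℂ) ^ 2) ^ N = ((D : ℝ) : ℂ) := by
      rw [hD]; push_cast; ring
    rw [div_pow, hcast, Complex.div_ofReal_re, ← hR]
  rw [hden, hnum, hRHS]
  field_simp
  try ring
end

section
/- For real y ≠ 0, define g(y) = log(1 + √(1 - e^{-4y²})). Then (1/(4π)) g''(y) + 1/π = (1/π) · (1 - (4y² + 1)e^{-4y²}) / (1 - e^{-4y²})^{3/2}. -/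
open Real

private lemma exp_lt_one' (x : ℝ) (hx : x ≠ 0) : Real.exp (-4 * x ^ 2) < 1 := by
  rw [← Real.exp_zero]
  have h2 : 0 < x ^ 2 := by positivity
  exact Real.exp_lt_exp.2 (by nlinarith)

private lemma hasDerivAt_g (x : ℝ) (hx : x ≠ 0) :
    HasDerivAt (fun x : ℝ => Real.log (1 + Real.sqrt (1 - Real.exp (-4 * x ^ 2))))
      (4 * x / Real.sqrt (1 - Real.exp (-4 * x ^ 2)) - 4 * x) x := by
  have hpos : 0 < 1 - Real.exp (-4 * x ^ 2) := by linarith [exp_lt_one' x hx]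
  set u := Real.exp (-4 * x ^ 2) with hu
  set s := Real.sqrt (1 - u) with hsdef
  have hs : 0 < s := Real.sqrt_pos.2 hpos
  have hs2 : s ^ 2 = 1 - u := Real.sq_sqrt hpos.le
  have h1 : HasDerivAt (fun x : ℝ => -4 * x ^ 2) (-8 * x) x := by
    have := (hasDerivAt_pow 2 x).const_mul (-4 : ℝ)
    convert this using 1
    exacts [rfl, rfl, by simp; ring]
  have h2 : HasDerivAt (fun x : ℝ => Real.exp (-4 * x ^ 2)) (u * (-8 * x)) x := h1.exp
  have h3 : HasDerivAt (fun x : ℝ => 1 - Real.exp (-4 * x ^ 2)) (8 * x * u) x := by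
    have := h2.const_sub 1
    convert this using 1
    exacts [rfl, rfl, by ring]
  have h4 : HasDerivAt (fun x : ℝ => Real.sqrt (1 - Real.exp (-4 * x ^ 2)))
      (8 * x * u / (2 * s)) x := h3.sqrt (ne_of_gt hpos)
  have h5 : HasDerivAt (fun x : ℝ => 1 + Real.sqrt (1 - Real.exp (-4 * x ^ 2)))
      (8 * x * u / (2 * s)) x := h4.const_add 1
  have h6 : HasDerivAt (fun x : ℝ => Real.log (1 + Real.sqrt (1 - Real.exp (-4 * x ^ 2))))
      ((8 * x * u / (2 * s)) / (1 + s)) x := h5.log (by positivity)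
  convert h6 using 1
  have h1s : (1 : ℝ) + s ≠ 0 := by positivity
  field_simp
  linear_combination (-8) * hs2

private lemma deriv_g_eq (x : ℝ) (hx : x ≠ 0) :
    deriv (fun x : ℝ => Real.log (1 + Real.sqrt (1 - Real.exp (-4 * x ^ 2)))) x
      = 4 * x / Real.sqrt (1 - Real.exp (-4 * x ^ 2)) - 4 * x :=
  (hasDerivAt_g x hx).deriv

theorem scaled_density_formula (y : ℝ) (hy : y ≠ 0) :
    (1 / (4 * π)) *
        deriv (deriv (fun x : ℝ => Real.log (1 + Real.sqrt (1 - Real.exp (-4 * x ^ 2))))) y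
      + 1 / π
      = (1 / π) * ((1 - (4 * y ^ 2 + 1) * Real.exp (-4 * y ^ 2)) /
          (1 - Real.exp (-4 * y ^ 2)) ^ ((3 : ℝ) / 2)) := by
  have hpos : 0 < 1 - Real.exp (-4 * y ^ 2) := by linarith [exp_lt_one' y hy]
  set u := Real.exp (-4 * y ^ 2) with hu
  set s := Real.sqrt (1 - u) with hsdef
  have hs : 0 < s := Real.sqrt_pos.2 hpos
  have hs2 : s ^ 2 = 1 - u := Real.sq_sqrt hpos.le
  -- second derivative
  have heq : deriv (fun x : ℝ => Real.log (1 + Real.sqrt (1 - Real.exp (-4 * x ^ 2))))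
      =ᶠ[nhds y] fun x => 4 * x / Real.sqrt (1 - Real.exp (-4 * x ^ 2)) - 4 * x := by
    filter_upwards [isOpen_compl_singleton.mem_nhds (by simpa using hy : y ∈ ({0}ᶜ : Set ℝ))]
      with x hx
    exact deriv_g_eq x hx
  have hpos' : 0 < 1 - Real.exp (-4 * y ^ 2) := hpos
  have h1 : HasDerivAt (fun x : ℝ => -4 * x ^ 2) (-8 * y) y := by
    have := (hasDerivAt_pow 2 y).const_mul (-4 : ℝ)
    convert this using 1
    exacts [rfl, rfl, by simp; ring]
  have h3 : HasDerivAt (fun x : ℝ => 1 - Real.exp (-4 * x ^ 2)) (8 * y * u) y := by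
    have := (h1.exp).const_sub 1
    convert this using 1
    exacts [rfl, rfl, by ring]
  have h4 : HasDerivAt (fun x : ℝ => Real.sqrt (1 - Real.exp (-4 * x ^ 2)))
      (8 * y * u / (2 * s)) y := h3.sqrt (ne_of_gt hpos)
  have hnum : HasDerivAt (fun x : ℝ => 4 * x) (4 : ℝ) y := by
    simpa using (hasDerivAt_id y).const_mul (4 : ℝ)
  have hdiv : HasDerivAt (fun x : ℝ => 4 * x / Real.sqrt (1 - Real.exp (-4 * x ^ 2)))
      ((4 * s - 4 * y * (8 * y * u / (2 * s))) / s ^ 2) y :=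
    hnum.div h4 (ne_of_gt hs)
  have hh : HasDerivAt (fun x : ℝ => 4 * x / Real.sqrt (1 - Real.exp (-4 * x ^ 2)) - 4 * x)
      ((4 * s - 4 * y * (8 * y * u / (2 * s))) / s ^ 2 - 4) y := hdiv.sub hnum
  have hD2 : deriv (deriv (fun x : ℝ => Real.log (1 + Real.sqrt (1 - Real.exp (-4 * x ^ 2))))) y
      = (4 * s - 4 * y * (8 * y * u / (2 * s))) / s ^ 2 - 4 := by
    rw [heq.deriv_eq]
    exact hh.deriv
  rw [hD2]
  have hrpow : (1 - u) ^ ((3 : ℝ) / 2) = (1 - u) * s := by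
    have : ((3 : ℝ) / 2) = 1 + 1 / 2 := by norm_num
    rw [this, Real.rpow_add hpos, Real.rpow_one, hsdef, Real.sqrt_eq_rpow]
  rw [hrpow]
  have hπ : π ≠ 0 := Real.pi_ne_zero
  have hus : (1 - u) * s ≠ 0 := by positivity
  field_simp
  linear_combination (8 * y ^ 2 * u) * hs2
end

section
/- For y ∈ ℝ^m \ {0}, the second partial derivatives of h(y) = (1/2) log(1 + √(1 - e^{-4‖y‖²})) satisfy ∂²h/∂y_j∂y_k (y) = O(1/‖y‖) as y → 0; that is, there exist C, δ > 0 such that |∂²h/∂y_j∂y_k(y)| ≤ C/‖y‖ for 0 < ‖y‖ < δ. -/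
open Real

noncomputable def hsE (t : ℝ) : ℝ := Real.exp (-4 * t)
noncomputable def hsS (t : ℝ) : ℝ := Real.sqrt (1 - hsE t)
noncomputable def hsPhi' (t : ℝ) : ℝ := hsE t / (hsS t * (1 + hsS t))
noncomputable def hsPhi'' (t : ℝ) : ℝ :=
  ((-4 * hsE t) * (hsS t * (1 + hsS t))
    - hsE t * ((2 * hsE t / hsS t) * (1 + 2 * hsS t))) / (hsS t * (1 + hsS t))^2

lemma hsE_pos (t : ℝ) : 0 < hsE t := Real.exp_pos _
lemma hsE_le_one {t : ℝ} (ht : 0 ≤ t) : hsE t ≤ 1 := by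
  rw [hsE, Real.exp_le_one_iff]; linarith
lemma hsE_lt_one {t : ℝ} (ht : 0 < t) : hsE t < 1 := by
  rw [hsE, Real.exp_lt_one_iff]; linarith
lemma hsu_pos {t : ℝ} (ht : 0 < t) : 0 < 1 - hsE t := by linarith [hsE_lt_one ht]
lemma hsu_ge {t : ℝ} (ht : 0 < t) (ht' : t ≤ 1/4) : t ≤ 1 - hsE t := by
  have h1 : hsE t * (4 * t) ≤ hsE t * (Real.exp (4 * t) - 1) := by
    have := Real.add_one_le_exp (4 * t)
    nlinarith [hsE_pos t]
  have h2 : hsE t * (Real.exp (4 * t) - 1) = 1 - hsE t := by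
    rw [hsE, mul_sub, ← Real.exp_add]; ring_nf; rw [Real.exp_zero]
  have h3 : (1:ℝ)/4 ≤ hsE t := by
    rw [hsE]
    have ha : Real.exp (-1 : ℝ) ≤ Real.exp (-4 * t) := by
      apply Real.exp_le_exp.2; linarith
    have he : Real.exp (1:ℝ) ≤ 4 := by
      have := Real.exp_one_lt_d9; linarith
    have hb : (1:ℝ)/4 ≤ Real.exp (-1 : ℝ) := by
      rw [Real.exp_neg, div_le_iff₀ (by norm_num), inv_mul_eq_div,
        le_div_iff₀ (Real.exp_pos _)]
      linarith
    linarith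
  nlinarith
lemma hsS_pos {t : ℝ} (ht : 0 < t) : 0 < hsS t := Real.sqrt_pos.2 (hsu_pos ht)
lemma hsS_lt_one {t : ℝ} (ht : 0 < t) : hsS t < 1 := by
  have := Real.sqrt_lt_sqrt (le_of_lt (hsu_pos ht))
    (show 1 - hsE t < 1 by linarith [hsE_pos t])
  simpa [hsS] using this
lemma hsS_ge {t : ℝ} (ht : 0 < t) (ht' : t ≤ 1/4) : Real.sqrt t ≤ hsS t :=
  Real.sqrt_le_sqrt (hsu_ge ht ht')

lemma hsE_hasDeriv (t : ℝ) : HasDerivAt hsE (-4 * hsE t) t := by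
  have h := ((hasDerivAt_id t).const_mul (-4 : ℝ)).exp
  show HasDerivAt (fun t => Real.exp (-4 * t)) _ t
  simpa [hsE, mul_comm] using h

lemma hsS_hasDeriv {t : ℝ} (ht : 0 < t) :
    HasDerivAt hsS (4 * hsE t / (2 * hsS t)) t := by
  have h : HasDerivAt (fun t => 1 - hsE t) (4 * hsE t) t := by
    simpa using (hsE_hasDeriv t).const_sub (1:ℝ)
  show HasDerivAt (fun t => Real.sqrt (1 - hsE t)) _ t
  simpa [hsS] using h.sqrt (ne_of_gt (hsu_pos ht))

lemma hsPhi_hasDeriv {t : ℝ} (ht : 0 < t) :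
    HasDerivAt (fun t => (1/2) * Real.log (1 + hsS t)) (hsPhi' t) t := by
  have hs0 : hsS t ≠ 0 := ne_of_gt (hsS_pos ht)
  have hs1 : (1:ℝ) + hsS t ≠ 0 := ne_of_gt (by nlinarith [hsS_pos ht])
  have h1 : HasDerivAt (fun t => 1 + hsS t) (4 * hsE t / (2 * hsS t)) t := by
    simpa using (hsS_hasDeriv ht).const_add (1:ℝ)
  have h2 := (h1.log hs1).const_mul (1/2 : ℝ)
  refine h2.congr_deriv ?_
  rw [hsPhi']
  field_simp
  ring

lemma hsPhi'_hasDeriv {t : ℝ} (ht : 0 < t) :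
    HasDerivAt hsPhi' (hsPhi'' t) t := by
  have hs := hsS_pos ht
  have hs0 : hsS t ≠ 0 := ne_of_gt hs
  have hden : HasDerivAt (fun t => hsS t * (1 + hsS t))
      ((4 * hsE t / (2 * hsS t)) * (1 + hsS t) + hsS t * (4 * hsE t / (2 * hsS t))) t :=
    (hsS_hasDeriv ht).mul (by simpa using (hsS_hasDeriv ht).const_add (1:ℝ))
  have hne : hsS t * (1 + hsS t) ≠ 0 := by positivity
  have h := (hsE_hasDeriv t).div hden hne
  have h2 : HasDerivAt (fun t => hsE t / (hsS t * (1 + hsS t))) (hsPhi'' t) t := by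
    refine h.congr_deriv ?_
    rw [hsPhi'']
    field_simp
    ring
  exact h2

lemma hsPhi'_bound {t : ℝ} (ht : 0 < t) (ht' : t ≤ 1/4) :
    |hsPhi' t| ≤ 1 / Real.sqrt t := by
  have ha : 0 < hsS t := hsS_pos ht
  have hA : Real.sqrt t ≤ hsS t := hsS_ge ht ht'
  have hq : 0 < Real.sqrt t := Real.sqrt_pos.2 ht
  have hE1 := hsE_le_one ht.le
  have hEp := hsE_pos t
  rw [hsPhi', abs_of_nonneg (by positivity)]
  rw [div_le_div_iff₀ (by positivity) hq]
  have h1 : hsE t * Real.sqrt t ≤ Real.sqrt t := mul_le_of_le_one_left hq.le hE1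
  nlinarith [sq_nonneg (hsS t)]

lemma hsPhi''_bound {t : ℝ} (ht : 0 < t) (ht' : t ≤ 1/4) :
    |hsPhi'' t| ≤ 14 / (Real.sqrt t)^3 := by
  have ha : 0 < hsS t := hsS_pos ht
  have ha1 : hsS t < 1 := hsS_lt_one ht
  have hA : Real.sqrt t ≤ hsS t := hsS_ge ht ht'
  have hq : 0 < Real.sqrt t := Real.sqrt_pos.2 ht
  have hE1 := hsE_le_one ht.le
  have hEp := hsE_pos t
  have hnum : |(-4 * hsE t) * (hsS t * (1 + hsS t))
      - hsE t * ((2 * hsE t / hsS t) * (1 + 2 * hsS t))| ≤ 14 / hsS t := by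
    have hx : |(-4 * hsE t) * (hsS t * (1 + hsS t))| ≤ 8 / hsS t := by
      rw [abs_of_nonpos (by nlinarith [mul_pos hEp (mul_pos ha (show (0:ℝ) < 1 + hsS t by linarith))]),
        le_div_iff₀ ha]
      have hs2 : hsS t ^ 2 ≤ 1 := by nlinarith
      have hs3 : hsS t ^ 3 ≤ 1 := by nlinarith
      nlinarith [mul_nonneg (sub_nonneg.2 hE1)
        (mul_nonneg (sq_nonneg (hsS t)) (show (0:ℝ) ≤ 1 + hsS t by linarith))]
    have hy : |hsE t * ((2 * hsE t / hsS t) * (1 + 2 * hsS t))| ≤ 6 / hsS t := by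
      rw [abs_of_nonneg (by positivity), le_div_iff₀ ha]
      have heq : hsE t * ((2 * hsE t / hsS t) * (1 + 2 * hsS t)) * hsS t
          = 2 * hsE t ^ 2 * (1 + 2 * hsS t) := by field_simp
      rw [heq]
      nlinarith
    calc |(-4 * hsE t) * (hsS t * (1 + hsS t))
        - hsE t * ((2 * hsE t / hsS t) * (1 + 2 * hsS t))|
        ≤ |(-4 * hsE t) * (hsS t * (1 + hsS t))|
          + |hsE t * ((2 * hsE t / hsS t) * (1 + 2 * hsS t))| := abs_sub _ _
      _ ≤ 8 / hsS t + 6 / hsS t := add_le_add hx hy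
      _ = 14 / hsS t := by ring
  have key : |hsPhi'' t| ≤ 14 / (hsS t)^3 := by
    rw [hsPhi'', abs_div, abs_of_nonneg (by positivity : (0:ℝ) ≤ (hsS t * (1 + hsS t))^2)]
    calc _ ≤ (14 / hsS t) / (hsS t * (1 + hsS t))^2 :=
          (div_le_div_iff_of_pos_right (by positivity)).2 hnum
      _ ≤ (14 / hsS t) / (hsS t)^2 := by
          apply div_le_div_of_nonneg_left (by positivity) (by positivity)
          nlinarith [mul_pos ha ha]
      _ = 14 / (hsS t)^3 := by field_simp
  refine key.trans ?_
  apply div_le_div_of_nonneg_left (by norm_num) (by positivity)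
  exact pow_le_pow_left₀ hq.le hA 3


lemma hs_inner_hasFDeriv {m : ℕ} (x : EuclideanSpace ℝ (Fin m)) (hx : x ≠ 0) :
    HasFDerivAt (fun w : EuclideanSpace ℝ (Fin m) =>
      (1 / 2) * Real.log (1 + Real.sqrt (1 - Real.exp (-4 * ‖w‖ ^ 2))))
      (hsPhi' (‖x‖ ^ 2) • (2 • (innerSL ℝ x))) x := by
  have hq : HasFDerivAt (fun w : EuclideanSpace ℝ (Fin m) => ‖w‖ ^ 2) (2 • innerSL ℝ x) x :=
    (hasStrictFDerivAt_norm_sq x).hasFDerivAt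
  have ht : 0 < ‖x‖ ^ 2 := by
    have := norm_pos_iff.2 hx
    positivity
  have h := (hsPhi_hasDeriv ht).comp_hasFDerivAt x hq
  exact h

theorem h_second_partials_near_zero (m : ℕ) (hm : 2 ≤ m) (j k : Fin m) :
    ∃ C δ : ℝ, 0 < C ∧ 0 < δ ∧ ∀ y : EuclideanSpace ℝ (Fin m), 0 < ‖y‖ → ‖y‖ < δ →
      |fderiv ℝ (fun x : EuclideanSpace ℝ (Fin m) =>
          fderiv ℝ (fun w : EuclideanSpace ℝ (Fin m) =>
            (1 / 2) * Real.log (1 + Real.sqrt (1 - Real.exp (-4 * ‖w‖ ^ 2)))) x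
            (EuclideanSpace.single k 1)) y (EuclideanSpace.single j 1)| ≤ C / ‖y‖ := by
  refine ⟨58, 1/2, by norm_num, by norm_num, fun y hy0 hyδ => ?_⟩
  have hyne : y ≠ 0 := by
    intro h; rw [h] at hy0; simp at hy0
  set ek := EuclideanSpace.single k (1:ℝ) with hek
  set ej := EuclideanSpace.single j (1:ℝ) with hej
  have htpos : 0 < ‖y‖ ^ 2 := by positivity
  have ht4 : ‖y‖ ^ 2 ≤ 1/4 := by nlinarith
  -- the first derivative function, rewritten on a neighborhood of y
  have hev : (fun x : EuclideanSpace ℝ (Fin m) => fderiv ℝ (fun w : EuclideanSpace ℝ (Fin m) =>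
        (1 / 2) * Real.log (1 + Real.sqrt (1 - Real.exp (-4 * ‖w‖ ^ 2)))) x ek)
      =ᶠ[nhds y] (fun x => hsPhi' (‖x‖ ^ 2) * (2 * (inner ℝ x ek : ℝ))) := by
    filter_upwards [eventually_ne_nhds hyne] with x hx
    rw [(hs_inner_hasFDeriv x hx).fderiv]
    simp [mul_comm]
  -- derivative of the explicit formula
  have hc : HasFDerivAt (fun x : EuclideanSpace ℝ (Fin m) => hsPhi' (‖x‖ ^ 2))
      (hsPhi'' (‖y‖ ^ 2) • (2 • innerSL ℝ y)) y :=
    by have h := (hsPhi'_hasDeriv htpos).comp_hasFDerivAt y (hasStrictFDerivAt_norm_sq y).hasFDerivAt; exact h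
  have hd : HasFDerivAt (fun x : EuclideanSpace ℝ (Fin m) => 2 * (inner ℝ x ek : ℝ))
      ((2:ℝ) • ((innerSL ℝ (E := EuclideanSpace ℝ (Fin m))).flip ek)) y :=
    (((innerSL ℝ (E := EuclideanSpace ℝ (Fin m))).flip ek).hasFDerivAt).const_mul (2:ℝ)
  have hG := hc.mul hd
  rw [hev.fderiv_eq, (show HasFDerivAt (fun x : EuclideanSpace ℝ (Fin m) => hsPhi' (‖x‖ ^ 2) * (2 * (inner ℝ x ek : ℝ))) _ y from hG).fderiv]
  have hval : ((fun x : EuclideanSpace ℝ (Fin m) => hsPhi' (‖x‖ ^ 2)) y •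
        ((2:ℝ) • ((innerSL ℝ (E := EuclideanSpace ℝ (Fin m))).flip ek)) +
        (fun x : EuclideanSpace ℝ (Fin m) => 2 * (inner ℝ x ek : ℝ)) y •
        (hsPhi'' (‖y‖ ^ 2) • (2 • innerSL ℝ y))) ej
      = hsPhi' (‖y‖ ^ 2) * (2 * (inner ℝ ej ek : ℝ))
        + (2 * (inner ℝ y ek : ℝ)) * (hsPhi'' (‖y‖ ^ 2) * (2 * (inner ℝ y ej : ℝ))) := by
    simp only [ContinuousLinearMap.add_apply, ContinuousLinearMap.smul_apply,
      ContinuousLinearMap.flip_apply, smul_eq_mul, innerSL_apply_apply]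
    rw [innerSL_apply_apply]
    ring
  rw [hval]
  -- bounds
  have hsq : Real.sqrt (‖y‖ ^ 2) = ‖y‖ := Real.sqrt_sq (norm_nonneg y)
  have hp' : |hsPhi' (‖y‖ ^ 2)| ≤ 1 / ‖y‖ := by
    have := hsPhi'_bound htpos ht4; rwa [hsq] at this
  have hp'' : |hsPhi'' (‖y‖ ^ 2)| ≤ 14 / ‖y‖ ^ 3 := by
    have := hsPhi''_bound htpos ht4; rwa [hsq] at this
  have hejn : ‖ej‖ = 1 := by rw [hej, EuclideanSpace.norm_single]; norm_num
  have hekn : ‖ek‖ = 1 := by rw [hek, EuclideanSpace.norm_single]; norm_num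
  have hi1 : |(inner ℝ ej ek : ℝ)| ≤ 1 := by
    have := abs_real_inner_le_norm ej ek; rwa [hejn, hekn, one_mul] at this
  have hi2 : |(inner ℝ y ek : ℝ)| ≤ ‖y‖ := by
    have := abs_real_inner_le_norm y ek; rwa [hekn, mul_one] at this
  have hi3 : |(inner ℝ y ej : ℝ)| ≤ ‖y‖ := by
    have := abs_real_inner_le_norm y ej; rwa [hejn, mul_one] at this
  have hA : |hsPhi' (‖y‖ ^ 2) * (2 * (inner ℝ ej ek : ℝ))| ≤ 2 / ‖y‖ := by
    rw [abs_mul, abs_mul, abs_two]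
    have h1 : |hsPhi' (‖y‖ ^ 2)| * |(inner ℝ ej ek : ℝ)| ≤ (1 / ‖y‖) * 1 :=
      mul_le_mul hp' hi1 (abs_nonneg _) (by positivity)
    calc |hsPhi' (‖y‖ ^ 2)| * (2 * |(inner ℝ ej ek : ℝ)|)
        = 2 * (|hsPhi' (‖y‖ ^ 2)| * |(inner ℝ ej ek : ℝ)|) := by ring
      _ ≤ 2 * (1 / ‖y‖ * 1) := by linarith
      _ = 2 / ‖y‖ := by ring
  have hB : |(2 * (inner ℝ y ek : ℝ)) * (hsPhi'' (‖y‖ ^ 2) * (2 * (inner ℝ y ej : ℝ)))|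
      ≤ 56 / ‖y‖ := by
    rw [abs_mul, abs_mul, abs_mul, abs_mul, abs_two]
    have h1 : |hsPhi'' (‖y‖ ^ 2)| * |(inner ℝ y ek : ℝ)| ≤ (14 / ‖y‖ ^ 3) * ‖y‖ :=
      mul_le_mul hp'' hi2 (abs_nonneg _) (by positivity)
    have h2 : (|hsPhi'' (‖y‖ ^ 2)| * |(inner ℝ y ek : ℝ)|) * |(inner ℝ y ej : ℝ)|
        ≤ ((14 / ‖y‖ ^ 3) * ‖y‖) * ‖y‖ :=
      mul_le_mul h1 hi3 (abs_nonneg _) (by positivity)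
    calc 2 * |(inner ℝ y ek : ℝ)| * (|hsPhi'' (‖y‖ ^ 2)| * (2 * |(inner ℝ y ej : ℝ)|))
        = 4 * (|hsPhi'' (‖y‖ ^ 2)| * |(inner ℝ y ek : ℝ)| * |(inner ℝ y ej : ℝ)|) := by ring
      _ ≤ 4 * ((14 / ‖y‖ ^ 3) * ‖y‖ * ‖y‖) := by linarith
      _ = 56 / ‖y‖ := by field_simp; ring
  calc |hsPhi' (‖y‖ ^ 2) * (2 * (inner ℝ ej ek : ℝ))
        + (2 * (inner ℝ y ek : ℝ)) * (hsPhi'' (‖y‖ ^ 2) * (2 * (inner ℝ y ej : ℝ)))|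
      ≤ |hsPhi' (‖y‖ ^ 2) * (2 * (inner ℝ ej ek : ℝ))|
        + |(2 * (inner ℝ y ek : ℝ)) * (hsPhi'' (‖y‖ ^ 2) * (2 * (inner ℝ y ej : ℝ)))| :=
        abs_add_le _ _
    _ ≤ 2 / ‖y‖ + 56 / ‖y‖ := add_le_add hA hB
    _ = 58 / ‖y‖ := by ring
end
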